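/- arXiv:1701.01316 — 4 statements merged into one kernel-verified Lean document; each statement's English description precedes it below -/
import Mathlib

section
/- Let d ≥ 1 and let v : ℝ × ℝ^d → ℝ^d be continuous and bounded, such that for each t the map x ↦ v(t,x) is measurable. Let Φ : ℝ × ℝ^d → ℝ^d satisfy Φ(0,x) = x for all x, let each map x ↦ Φ(t,x) be measurable, and assume that for every x the curve t ↦ Φ(t,x) is differentiable with ∂_tΦ(t,x) = v(t, Φ(t,x)). Let μ₀ be a finite Borel measure on ℝ^d, and set μ_t = Φ(t,·)#μ₀. Then for every continuously differentiable function φ : ℝ^d → ℝ with φ and its gradient ∇φ bounded, the function t ↦ ∫ φ dμ_t is differentiable on ℝ, with derivative (d/dt) ∫ φ dμ_t = ∫ ⟨∇φ(y), v(t,y)⟩ dμ_t(y). That is, μ_t = Φ(t,·)#μ₀ is a weak (distributional) solution of the continuity equation ∂_tμ + ∇·(v μ) = 0 with initial datum μ₀ (the push-forward representation formula of Theorem 2.3). -/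
open MeasureTheory RealInnerProductSpace

/-- The push-forward of a measure along the flow of a bounded continuous
time-dependent vector field is a weak (distributional) solution of the
continuity equation (the push-forward representation formula of Theorem 2.3). -/
theorem stmt_2 (d : ℕ) (hd : 1 ≤ d)
    (v : ℝ × EuclideanSpace ℝ (Fin d) → EuclideanSpace ℝ (Fin d))
    (hv_cont : Continuous v) (hv_bdd : ∃ C : ℝ, ∀ p, ‖v p‖ ≤ C)
    (hv_meas : ∀ t : ℝ, Measurable (fun x => v (t, x)))
    (Φ : ℝ × EuclideanSpace ℝ (Fin d) → EuclideanSpace ℝ (Fin d))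
    (hΦ0 : ∀ x, Φ (0, x) = x)
    (hΦ_meas : ∀ t : ℝ, Measurable (fun x => Φ (t, x)))
    (hΦ_ode : ∀ x, ∀ t : ℝ, HasDerivAt (fun s => Φ (s, x)) (v (t, Φ (t, x))) t)
    (μ₀ : Measure (EuclideanSpace ℝ (Fin d))) [IsFiniteMeasure μ₀]
    (φ : EuclideanSpace ℝ (Fin d) → ℝ) (hφ : ContDiff ℝ 1 φ)
    (hφ_bdd : ∃ C : ℝ, ∀ y, |φ y| ≤ C ∧ ‖gradient φ y‖ ≤ C) :
    ∀ t : ℝ,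
      HasDerivAt (fun s => ∫ y, φ y ∂(μ₀.map (fun x => Φ (s, x))))
        (∫ y, ⟪gradient φ y, v (t, y)⟫ ∂(μ₀.map (fun x => Φ (t, x)))) t := by
  intro t
  obtain ⟨Cv, hCv⟩ := hv_bdd
  obtain ⟨Cφ, hCφ⟩ := hφ_bdd
  -- rewrite integrals over pushforward as integrals over μ₀
  have hgrad_cont : Continuous (gradient φ) := by
    have : Continuous (fderiv ℝ φ) := hφ.continuous_fderiv one_ne_zero
    exact (InnerProductSpace.toDual ℝ _).symm.continuous.comp this
  have hint_rw : ∀ s : ℝ, ∫ y, φ y ∂(μ₀.map (fun x => Φ (s, x)))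
      = ∫ x, φ (Φ (s, x)) ∂μ₀ := fun s =>
    integral_map (hΦ_meas s).aemeasurable hφ.continuous.aestronglyMeasurable
  have hint_rw' : ∫ y, ⟪gradient φ y, v (t, y)⟫ ∂(μ₀.map (fun x => Φ (t, x)))
      = ∫ x, ⟪gradient φ (Φ (t, x)), v (t, Φ (t, x))⟫ ∂μ₀ :=
    integral_map (hΦ_meas t).aemeasurable
      ((hgrad_cont.measurable.inner (hv_meas t)).aestronglyMeasurable)
  simp only [hint_rw]
  rw [hint_rw']
  -- differentiation under the integral sign
  set F : ℝ → EuclideanSpace ℝ (Fin d) → ℝ := fun s x => φ (Φ (s, x)) with hF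
  set F' : ℝ → EuclideanSpace ℝ (Fin d) → ℝ :=
    fun s x => ⟪gradient φ (Φ (s, x)), v (s, Φ (s, x))⟫ with hF'
  have hdiff : ∀ x, ∀ s : ℝ, HasDerivAt (fun s => F s x) (F' s x) s := by
    intro x s
    have h1 : HasGradientAt φ (gradient φ (Φ (s, x))) (Φ (s, x)) :=
      (hφ.differentiable one_ne_zero (Φ (s, x))).hasGradientAt
    have h2 := h1.hasFDerivAt.comp_hasDerivAt s (hΦ_ode x s)
    have h3 : HasDerivAt (fun s => F s x)
        ((InnerProductSpace.toDual ℝ _ (gradient φ (Φ (s, x)))) (v (s, Φ (s, x)))) s := h2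
    simpa [F', InnerProductSpace.toDual_apply_apply] using h3
  have key := hasDerivAt_integral_of_dominated_loc_of_deriv_le (μ := μ₀)
    (F := F) (F' := F') (x₀ := t) (bound := fun _ => Cφ * Cv) (Metric.ball_mem_nhds t one_pos)
    (Filter.Eventually.of_forall fun s =>
      (hφ.continuous.measurable.comp (hΦ_meas s)).aestronglyMeasurable)
    ?_ ?_ ?_ ?_ ?_
  · exact key.2
  · -- Integrable (F t) μ₀
    apply (integrable_const Cφ).mono
      ((hφ.continuous.measurable.comp (hΦ_meas t)).aestronglyMeasurable)
    filter_upwards with x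
    simpa [F, Real.norm_eq_abs] using (hCφ (Φ (t, x))).1.trans (le_abs_self Cφ)
  · -- AEStronglyMeasurable (F' t)
    exact ((hgrad_cont.measurable.comp (hΦ_meas t)).inner
      ((hv_meas t).comp (hΦ_meas t))).aestronglyMeasurable
  · -- bound
    filter_upwards with x s _
    calc ‖F' s x‖ ≤ ‖gradient φ (Φ (s, x))‖ * ‖v (s, Φ (s, x))‖ :=
          norm_inner_le_norm _ _
      _ ≤ Cφ * Cv := by
          have h0 : (0:ℝ) ≤ ‖v (s, Φ (s, x))‖ := norm_nonneg _
          exact mul_le_mul (hCφ _).2 (hCv _) h0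
            ((norm_nonneg _).trans (hCφ (Φ (s,x))).2)
  · exact integrable_const _
  · filter_upwards with x s _ using hdiff x s
end

section
/- Let d ≥ 1, let f : ℝ^d → ℝ^d be continuously differentiable with bounded divergence, and let ρ : ℝ × ℝ^d → ℝ be a nonnegative continuously differentiable function such that there is a compact set K ⊆ ℝ^d with ρ(t,x) = 0 whenever x ∉ K, and such that the continuity equation ∂_t ρ(t,x) + ∇·(f(x) ρ(t,x)) = 0 holds pointwise. Then for every real p > 1, the function t ↦ ∫_{ℝ^d} ρ(t,x)^p dx is differentiable, and (d/dt) ∫ ρ(t,x)^p dx ≤ (p−1) ‖∇·f‖_∞ ∫ ρ(t,x)^p dx for every t. (Proposition 2.5, classical-solution form: the L^p norms of the density grow at most exponentially with rate controlled by the divergence of the velocity field.) -/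
open MeasureTheory RealInnerProductSpace

/-- The divergence of a vector field on `ℝ^d`. -/
noncomputable def diverg {d : ℕ}
    (f : EuclideanSpace ℝ (Fin d) → EuclideanSpace ℝ (Fin d))
    (x : EuclideanSpace ℝ (Fin d)) : ℝ :=
  ∑ i : Fin d, fderiv ℝ f x (EuclideanSpace.single i 1) i

open Set in
private lemma divPi (n : ℕ) (F : (Fin (n+1) → ℝ) → (Fin (n+1) → ℝ)) (hF : ContDiff ℝ 1 F)
    (K : Set (Fin (n+1) → ℝ)) (hK : IsCompact K) (hsupp : ∀ x ∉ K, F x = 0) :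
    ∫ x, ∑ i, fderiv ℝ F x (Pi.single i 1) i = 0 := by
  obtain ⟨R, hR0, hRK⟩ : ∃ R : ℝ, 0 < R ∧ K ⊆ Metric.closedBall 0 R := by
    obtain ⟨R, hRK⟩ := hK.isBounded.subset_closedBall 0
    exact ⟨max R 1, lt_of_lt_of_le one_pos (le_max_right _ _),
      hRK.trans (Metric.closedBall_subset_closedBall (le_max_left _ _))⟩
  set a : Fin (n+1) → ℝ := fun _ => -(R+1) with ha
  set b : Fin (n+1) → ℝ := fun _ => (R+1) with hb
  have hfd0 : ∀ x ∉ K, fderiv ℝ F x = 0 := by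
    intro x hx
    have hev : F =ᶠ[nhds x] (fun _ => (0 : Fin (n+1) → ℝ)) := by
      filter_upwards [hK.isClosed.isOpen_compl.mem_nhds hx] with y hy
      exact hsupp y hy
    rw [hev.fderiv_eq, fderiv_fun_const]
    rfl
  have hnorm : ∀ x : Fin (n+1) → ℝ, ∀ i, |x i| ≤ ‖x‖ := by
    intro x i
    exact norm_le_pi_norm x i
  have hKab : K ⊆ Icc a b := by
    intro x hx
    have := hRK hx
    simp only [Metric.mem_closedBall, dist_zero_right] at this
    refine ⟨fun i => ?_, fun i => ?_⟩ <;>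
    · have := (abs_le.mp ((hnorm x i).trans this))
      simp only [ha, hb]
      linarith [this.1, this.2]
  have hdivcont : Continuous fun x => ∑ i, fderiv ℝ F x (Pi.single i 1) i := by
    have h1 : Continuous fun x => fderiv ℝ F x := hF.continuous_fderiv one_ne_zero
    exact continuous_finset_sum _ fun i _ => (continuous_apply i).comp
      ((ContinuousLinearMap.apply ℝ (Fin (n+1) → ℝ) (Pi.single i 1)).continuous.comp h1)
  have key := integral_divergence_of_hasFDerivAt_off_countable a b
    (fun i => by simp [ha, hb]; linarith) F (fun x => fderiv ℝ F x) ∅ countable_empty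
    hF.continuous.continuousOn
    (fun x _ => (hF.differentiable one_ne_zero x).hasFDerivAt)
    (hdivcont.continuousOn.integrableOn_compact isCompact_Icc)
  -- faces vanish
  have hfaces : ∀ (i : Fin (n+1)) (c : ℝ), |c| = R + 1 →
      ∀ x : Fin n → ℝ, F (Fin.insertNth i c x : Fin (n+1) → ℝ) = 0 := by
    intro i c hc x
    apply hsupp
    intro hmem
    have h1 : ‖(Fin.insertNth i c x : Fin (n+1) → ℝ)‖ ≤ R := by
      have := hRK hmem
      simpa [dist_zero_right] using this
    have h2 : |(Fin.insertNth i c x : Fin (n+1) → ℝ) i| ≤ R := (hnorm _ i).trans h1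
    rw [Fin.insertNth_apply_same, hc] at h2
    linarith
  have hRHS : ∀ i : Fin (n+1),
      ((∫ x in Icc (a ∘ Fin.succAbove i) (b ∘ Fin.succAbove i),
          F (Fin.insertNth i (b i) x) i) -
        ∫ x in Icc (a ∘ Fin.succAbove i) (b ∘ Fin.succAbove i),
          F (Fin.insertNth i (a i) x) i) = 0 := by
    intro i
    have h1 : ∀ x : Fin n → ℝ, F (Fin.insertNth i (b i) x) i = 0 := by
      intro x; rw [hfaces i (b i) (by show |(R+1:ℝ)| = R+1; rw [abs_of_nonneg] <;> linarith) x]; rfl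
    have h2 : ∀ x : Fin n → ℝ, F (Fin.insertNth i (a i) x) i = 0 := by
      intro x; rw [hfaces i (a i) (by show |(-(R+1):ℝ)| = R+1; rw [abs_neg, abs_of_nonneg] <;> linarith) x]; rfl
    simp [h1, h2]
  rw [Finset.sum_congr rfl (fun i _ => hRHS i), Finset.sum_const_zero] at key
  rw [← key]
  symm
  apply setIntegral_eq_integral_of_forall_compl_eq_zero
  intro x hx
  have hxK : x ∉ K := fun h => hx (hKab h)
  have h0 := hfd0 x hxK
  simp [h0]

private lemma divE(d : ℕ) (hd : 1 ≤ d)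
    (g : EuclideanSpace ℝ (Fin d) → EuclideanSpace ℝ (Fin d)) (hg : ContDiff ℝ 1 g)
    (K : Set (EuclideanSpace ℝ (Fin d))) (hK : IsCompact K)
    (hsupp : ∀ x ∉ K, g x = 0) : ∫ x, diverg g x = 0 := by
  obtain ⟨n, rfl⟩ := Nat.exists_eq_succ_of_ne_zero (Nat.one_le_iff_ne_zero.mp hd)
  set e : EuclideanSpace ℝ (Fin (n+1)) ≃L[ℝ] (Fin (n+1) → ℝ) :=
    EuclideanSpace.equiv (Fin (n+1)) ℝ with he
  set G : (Fin (n+1) → ℝ) → (Fin (n+1) → ℝ) := fun y => e (g (e.symm y)) with hG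
  have hGc : ContDiff ℝ 1 G :=
    (e.contDiff).comp (hg.comp e.symm.contDiff)
  have hKG : IsCompact ((⇑e) '' K) := hK.image e.continuous
  have hGsupp : ∀ y ∉ (⇑e) '' K, G y = 0 := by
    intro y hy
    have : e.symm y ∉ K := by
      intro h
      exact hy ⟨e.symm y, h, e.apply_symm_apply y⟩
    simp [hG, hsupp _ this]
  have key := divPi n G hGc _ hKG hGsupp
  have hdiv : ∀ x : EuclideanSpace ℝ (Fin (n+1)),
      (∑ i, fderiv ℝ G (e x) (Pi.single i 1) i) = diverg g x := by
    intro x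
    have h1 : HasFDerivAt G
        (((e : EuclideanSpace ℝ (Fin (n+1)) →L[ℝ] (Fin (n+1) → ℝ)).comp
          (fderiv ℝ g x)).comp
          (e.symm : (Fin (n+1) → ℝ) →L[ℝ] EuclideanSpace ℝ (Fin (n+1)))) (e x) := by
      have h2 : HasFDerivAt (fun z => e (g z))
          ((e : EuclideanSpace ℝ (Fin (n+1)) →L[ℝ] (Fin (n+1) → ℝ)).comp (fderiv ℝ g x)) x :=
        (e : EuclideanSpace ℝ (Fin (n+1)) →L[ℝ] (Fin (n+1) → ℝ)).hasFDerivAt.comp x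
          (hg.differentiable one_ne_zero x).hasFDerivAt
      have h3 := h2.comp (e x) (e.symm.hasFDerivAt (x := e x))
      simpa [e.symm_apply_apply] using h3
    rw [h1.fderiv]
    unfold diverg
    refine Finset.sum_congr rfl fun i _ => ?_
    have h4 : (e.symm : (Fin (n+1) → ℝ) →L[ℝ] EuclideanSpace ℝ (Fin (n+1))) (Pi.single i 1)
        = EuclideanSpace.single i 1 := rfl
    simp only [ContinuousLinearMap.comp_apply, ContinuousLinearEquiv.coe_coe, h4]
    rfl
  have htrans := (EuclideanSpace.volume_preserving_symm_measurableEquiv_toLp (Fin (n+1))).integral_comp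
    (MeasurableEquiv.toLp 2 (Fin (n+1) → ℝ)).symm.measurableEmbedding
    (fun y => ∑ i, fderiv ℝ G y (Pi.single i 1) i)
  have hcoe : ∀ x : EuclideanSpace ℝ (Fin (n+1)),
      (MeasurableEquiv.toLp 2 (Fin (n+1) → ℝ)).symm x = e x := fun _ => rfl
  rw [← key, ← htrans]
  refine integral_congr_ae (Filter.Eventually.of_forall fun x => ?_)
  simpa [hcoe x] using (hdiv x).symm

/-- Proposition 2.5 (classical-solution form): along a classical compactly
supported nonnegative solution of the continuity equation, the `L^p` norms of
the density grow at most exponentially, with rate controlled by the divergence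
of the velocity field. -/
theorem stmt_7 (d : ℕ) (hd : 1 ≤ d)
    (f : EuclideanSpace ℝ (Fin d) → EuclideanSpace ℝ (Fin d))
    (hf : ContDiff ℝ 1 f)
    (C : ℝ) (hC : ∀ x, |diverg f x| ≤ C)
    (ρ : ℝ × EuclideanSpace ℝ (Fin d) → ℝ)
    (hρ : ContDiff ℝ 1 ρ) (hρpos : ∀ p, 0 ≤ ρ p)
    (K : Set (EuclideanSpace ℝ (Fin d))) (hK : IsCompact K)
    (hρsupp : ∀ (t : ℝ) (x : EuclideanSpace ℝ (Fin d)), x ∉ K → ρ (t, x) = 0)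
    (hPDE : ∀ (t : ℝ) (x : EuclideanSpace ℝ (Fin d)),
      deriv (fun s => ρ (s, x)) t
        + (ρ (t, x) * diverg f x + ⟪f x, gradient (fun y => ρ (t, y)) x⟫) = 0) :
    ∀ p : ℝ, 1 < p → ∀ t : ℝ,
      ∃ D : ℝ, HasDerivAt (fun s => ∫ x, ρ (s, x) ^ p) D t ∧
        D ≤ (p - 1) * C * ∫ x, ρ (t, x) ^ p := by
  intro p hp t
  have hp1 : (1:ℝ) ≤ p := hp.le
  have hp0 : p ≠ 0 := by linarith
  -- time derivative of ρ
  set ρt : ℝ → EuclideanSpace ℝ (Fin d) → ℝ := fun s x => fderiv ℝ ρ (s, x) (1, 0) with hρt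
  have hderivρ : ∀ (s : ℝ) (x : EuclideanSpace ℝ (Fin d)), HasDerivAt (fun u => ρ (u, x)) (ρt s x) s := by
    intro s x
    have h1 : HasDerivAt (fun u : ℝ => (u, x)) ((1:ℝ), (0 : EuclideanSpace ℝ (Fin d))) s :=
      (hasDerivAt_id s).prodMk (hasDerivAt_const s x)
    exact ((hρ.differentiable one_ne_zero (s, x)).hasFDerivAt).comp_hasDerivAt s h1
  have hρtcont : Continuous fun z : ℝ × EuclideanSpace ℝ (Fin d) => ρt z.1 z.2 := by
    have h1 : Continuous fun z : ℝ × EuclideanSpace ℝ (Fin d) => fderiv ℝ ρ z := hρ.continuous_fderiv one_ne_zero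
    exact (ContinuousLinearMap.apply ℝ ℝ ((1:ℝ), (0 : EuclideanSpace ℝ (Fin d)))).continuous.comp h1
  have hρt0 : ∀ (s : ℝ) (x : EuclideanSpace ℝ (Fin d)), x ∉ K → ρt s x = 0 := by
    intro s x hx
    have h1 : (fun u => ρ (u, x)) = fun _ => (0:ℝ) := funext fun u => hρsupp u x hx
    have h2 := hderivρ s x
    rw [h1] at h2
    exact h2.unique (hasDerivAt_const s 0)
  -- derivative of s ↦ ρ(s,x)^p
  set F' : ℝ → EuclideanSpace ℝ (Fin d) → ℝ := fun s x => ρt s x * p * ρ (s, x) ^ (p - 1) with hF'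
  have hFd : ∀ (s : ℝ) (x : EuclideanSpace ℝ (Fin d)), HasDerivAt (fun u => ρ (u, x) ^ p) (F' s x) s := by
    intro s x
    exact (hderivρ s x).rpow_const (Or.inr hp1)
  have hF'cont : Continuous fun z : ℝ × EuclideanSpace ℝ (Fin d) => F' z.1 z.2 := by
    have h1 : Continuous fun z : ℝ × EuclideanSpace ℝ (Fin d) => ρ z ^ (p - 1) :=
      hρ.continuous.rpow_const fun z => Or.inr (by linarith)
    exact (hρtcont.mul continuous_const).mul h1
  have hF'0 : ∀ (s : ℝ) (x : EuclideanSpace ℝ (Fin d)), x ∉ K → F' s x = 0 := by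
    intro s x hx
    simp [hF', hρt0 s x hx]
  -- integrability of x ↦ ρ(s,x)^p
  have hsuppP : ∀ (s : ℝ) (x : EuclideanSpace ℝ (Fin d)), x ∉ K → ρ (s, x) ^ p = 0 := by
    intro s x hx
    rw [hρsupp s x hx, Real.zero_rpow hp0]
  have hcontP : ∀ s : ℝ, Continuous fun x : EuclideanSpace ℝ (Fin d) => ρ (s, x) ^ p := by
    intro s
    exact (hρ.continuous.comp (Continuous.prodMk_right s)).rpow_const fun x => Or.inr (by linarith)
  have hintP : ∀ s : ℝ, Integrable (fun x : EuclideanSpace ℝ (Fin d) => ρ (s, x) ^ p) := by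
    intro s
    exact (hcontP s).integrable_of_hasCompactSupport
      (HasCompactSupport.intro hK (hsuppP s))
  -- dominated derivative bound
  obtain ⟨M, hM⟩ : ∃ M, ∀ z ∈ (Set.Icc (t-1) (t+1) ×ˢ K),
      ‖F' z.1 z.2‖ ≤ M := by
    exact ((isCompact_Icc.prod hK).exists_bound_of_continuousOn
      hF'cont.continuousOn).imp fun M h => fun z hz => h z hz
  have hboundInt : Integrable (K.indicator fun _ : EuclideanSpace ℝ (Fin d) => M) := by
    refine (IntegrableOn.integrable_indicator ?_ hK.measurableSet)
    exact integrableOn_const hK.measure_lt_top.ne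
  have key := hasDerivAt_integral_of_dominated_loc_of_deriv_le (μ := (volume : Measure (EuclideanSpace ℝ (Fin d))))
    (F := fun s x => ρ (s, x) ^ p) (F' := F') (x₀ := t)
    (bound := K.indicator fun _ => M) (Metric.ball_mem_nhds t one_pos)
    (Filter.Eventually.of_forall fun s => (hcontP s).aestronglyMeasurable)
    (hintP t)
    ((hF'cont.comp (Continuous.prodMk_right t)).aestronglyMeasurable)
    (Filter.Eventually.of_forall fun x => ?_)
    hboundInt
    (Filter.Eventually.of_forall fun x => fun s _ => hFd s x)
  rotate_left
  · -- bound
    intro s hs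
    by_cases hx : x ∈ K
    · rw [Set.indicator_of_mem hx]
      refine hM (s, x) ⟨?_, hx⟩
      have := Metric.mem_ball.mp hs
      rw [Real.dist_eq] at this
      constructor <;> [linarith [abs_le.mp this.le] ; linarith [(abs_le.mp this.le).2]]
    · rw [Set.indicator_of_notMem hx, hF'0 s x hx]
      simp
  obtain ⟨hIntF', hD⟩ := key
  refine ⟨_, hD, ?_⟩
  -- spatial derivative of ρ at time t
  set Lt : EuclideanSpace ℝ (Fin d) → (EuclideanSpace ℝ (Fin d) →L[ℝ] ℝ) :=
    fun x => fderiv ℝ (fun y => ρ (t, y)) x with hLt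
  have hφtd : ∀ x : EuclideanSpace ℝ (Fin d), HasFDerivAt (fun y => ρ (t, y)) (Lt x) x := by
    intro x
    have : DifferentiableAt ℝ (fun y : EuclideanSpace ℝ (Fin d) => ρ (t, y)) x :=
      (hρ.differentiable one_ne_zero (t, x)).comp x
        ((differentiableAt_const t).prodMk differentiableAt_id)
    exact this.hasFDerivAt
  have hgrad : ∀ x, ⟪f x, gradient (fun y => ρ (t, y)) x⟫ = Lt x (f x) := by
    intro x
    rw [real_inner_comm]
    exact InnerProductSpace.toDual_symm_apply
  have hPDE' : ∀ x, ρt t x = -(ρ (t, x) * diverg f x + Lt x (f x)) := by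
    intro x
    have h1 := hPDE t x
    rw [(hderivρ t x).deriv, hgrad x] at h1
    linarith
  -- the vector field g = ρ^p • f
  set g : EuclideanSpace ℝ (Fin d) → EuclideanSpace ℝ (Fin d) :=
    fun x => ρ (t, x) ^ p • f x with hg
  have hφPd : ∀ x, HasFDerivAt (fun y => ρ (t, y) ^ p)
      ((p * ρ (t, x) ^ (p - 1)) • Lt x) x := by
    intro x
    exact (hφtd x).rpow_const (Or.inr hp1)
  have hgd : ∀ x, HasFDerivAt g
      (ρ (t, x) ^ p • fderiv ℝ f x + ((p * ρ (t, x) ^ (p - 1)) • Lt x).smulRight (f x)) x := by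
    intro x
    exact (hφPd x).smul (hf.differentiable one_ne_zero x).hasFDerivAt
  have hsum : ∀ (L : EuclideanSpace ℝ (Fin d) →L[ℝ] ℝ) (v : EuclideanSpace ℝ (Fin d)),
      ∑ i, L (EuclideanSpace.single i 1) * v i = L v := by
    intro L v
    conv_rhs => rw [← (EuclideanSpace.basisFun (Fin d) ℝ).sum_repr v]
    rw [map_sum]
    refine Finset.sum_congr rfl fun i _ => ?_
    rw [EuclideanSpace.basisFun_apply, EuclideanSpace.basisFun_repr, ContinuousLinearMap.map_smul]
    simp [mul_comm]
  have hdivg : ∀ x, diverg g x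
      = ρ (t, x) ^ p * diverg f x + (p * ρ (t, x) ^ (p - 1)) * Lt x (f x) := by
    intro x
    unfold diverg
    rw [(hgd x).fderiv]
    have : ∀ i : Fin d,
        (ρ (t, x) ^ p • fderiv ℝ f x
          + ((p * ρ (t, x) ^ (p - 1)) • Lt x).smulRight (f x)) (EuclideanSpace.single i 1) i
        = ρ (t, x) ^ p * fderiv ℝ f x (EuclideanSpace.single i 1) i
          + (p * ρ (t, x) ^ (p - 1)) * (Lt x (EuclideanSpace.single i 1) * f x i) := by
      intro i
      simp [ContinuousLinearMap.add_apply, ContinuousLinearMap.smul_apply,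
        ContinuousLinearMap.smulRight_apply]
      ring
    rw [Finset.sum_congr rfl fun i _ => this i, Finset.sum_add_distrib, ← Finset.mul_sum,
      ← Finset.mul_sum, hsum (Lt x) (f x)]
  -- g is C¹ with compact support
  have hφPC : ContDiff ℝ 1 fun x : EuclideanSpace ℝ (Fin d) => ρ (t, x) ^ p := by
    have h1 : ContDiff ℝ 1 fun r : ℝ => r ^ p := by
      have := Real.contDiff_rpow_const_of_le (p := p) (n := 1) (by exact_mod_cast hp1)
      exact_mod_cast this
    exact h1.comp (hρ.comp (contDiff_const.prodMk contDiff_id))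
  have hgC : ContDiff ℝ 1 g := hφPC.smul hf
  have hg0 : ∀ x ∉ K, g x = 0 := by
    intro x hx
    simp [hg, hρsupp t x hx, Real.zero_rpow hp0]
  have hdivg0 : ∫ x, diverg g x = 0 := divE d hd g hgC K hK hg0
  -- pointwise identity for F' t
  have hpow : ∀ x, ρ (t, x) ^ (p - 1) * ρ (t, x) = ρ (t, x) ^ p := by
    intro x
    rcases eq_or_lt_of_le (hρpos (t, x)) with h | h
    · rw [← h, Real.zero_rpow (by linarith : p - 1 ≠ 0), Real.zero_rpow hp0, zero_mul]
    · nth_rewrite 2 [← Real.rpow_one (ρ (t, x))]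
      rw [← Real.rpow_add h]
      norm_num
  have hptwise : ∀ x, F' t x
      = (1 - p) * (ρ (t, x) ^ p * diverg f x) - diverg g x := by
    intro x
    rw [hdivg x]
    show ρt t x * p * ρ (t, x) ^ (p - 1) = _
    rw [hPDE' x]
    rw [← hpow x]
    ring
  -- continuity of divergences
  have hdivfC : Continuous fun x => diverg f x := by
    unfold diverg
    refine continuous_finset_sum _ fun i _ => ?_
    exact ((continuous_apply (A := fun _ : Fin d => ℝ) i).comp (PiLp.continuous_ofLp 2 _)).comp
      ((ContinuousLinearMap.apply ℝ (EuclideanSpace ℝ (Fin d)) (EuclideanSpace.single i 1)).continuous.comp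
        (hf.continuous_fderiv one_ne_zero))
  have hdivgC : Continuous fun x => diverg g x := by
    unfold diverg
    refine continuous_finset_sum _ fun i _ => ?_
    exact ((continuous_apply (A := fun _ : Fin d => ℝ) i).comp (PiLp.continuous_ofLp 2 _)).comp
      ((ContinuousLinearMap.apply ℝ (EuclideanSpace ℝ (Fin d)) (EuclideanSpace.single i 1)).continuous.comp
        (hgC.continuous_fderiv one_ne_zero))
  have hdivg0' : ∀ x ∉ K, diverg g x = 0 := by
    intro x hx
    have hev : g =ᶠ[nhds x] (fun _ => (0 : EuclideanSpace ℝ (Fin d))) := by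
      filter_upwards [hK.isClosed.isOpen_compl.mem_nhds hx] with y hy
      exact hg0 y hy
    unfold diverg
    rw [hev.fderiv_eq, fderiv_fun_const]
    simp
  have hdivgI : Integrable (fun x => diverg g x) :=
    hdivgC.integrable_of_hasCompactSupport (HasCompactSupport.intro hK hdivg0')
  have hAI : Integrable (fun x => ρ (t, x) ^ p * diverg f x) := by
    refine ((hcontP t).mul hdivfC).integrable_of_hasCompactSupport
      (HasCompactSupport.intro hK fun x hx => ?_)
    rw [Pi.mul_apply, hsuppP t x hx, zero_mul]
  -- compute the derivative value
  have hDval : ∫ x, F' t x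
      = (1 - p) * ∫ x, ρ (t, x) ^ p * diverg f x := by
    rw [integral_congr_ae (Filter.Eventually.of_forall hptwise), integral_sub
      (hAI.const_mul (1 - p)) hdivgI, hdivg0, sub_zero, integral_const_mul]
  rw [hDval]
  -- final estimate
  have h1 : ∫ x, -(ρ (t, x) ^ p * diverg f x) ≤ C * ∫ x, ρ (t, x) ^ p := by
    rw [← integral_const_mul]
    refine integral_mono hAI.neg ((hintP t).const_mul C) fun x => ?_
    have h2 := hC x
    have h3 : (0:ℝ) ≤ ρ (t, x) ^ p := Real.rpow_nonneg (hρpos (t, x)) p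
    have h4 : -diverg f x ≤ C := by
      have := abs_le.mp h2
      linarith [this.1]
    calc -(ρ (t, x) ^ p * diverg f x) = ρ (t, x) ^ p * (-diverg f x) := by ring
    _ ≤ ρ (t, x) ^ p * C := mul_le_mul_of_nonneg_left h4 h3
    _ = C * ρ (t, x) ^ p := by ring
  rw [integral_neg] at h1
  have h5 : (0:ℝ) ≤ p - 1 := by linarith
  calc (1 - p) * ∫ x, ρ (t, x) ^ p * diverg f x
      = (p - 1) * (-∫ x, ρ (t, x) ^ p * diverg f x) := by ring
  _ ≤ (p - 1) * (C * ∫ x, ρ (t, x) ^ p) := mul_le_mul_of_nonneg_left h1 h5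
  _ = (p - 1) * C * ∫ x, ρ (t, x) ^ p := by ring
end

section
/- Let a ≤ b, a' ≤ b' be real numbers and η, η' > 0. Then the mollified indicator functions satisfy the L¹ estimate ∫_ℝ |χ^η_{[a,b]}(x) − χ^{η'}_{[a',b']}(x)| dx ≤ |η − η'| + |a − a'| + |b − b'|. (Key estimate in the proof of Lemma 4.3, giving Lipschitz dependence of the control family on its parameters in L¹ of the Lebesgue measure.) -/
open MeasureTheory

/-- The mollified indicator function `χ^η_[a,b]`. -/
noncomputable def chiEta (a b η : ℝ) (x : ℝ) : ℝ :=
  if x < a - η ∨ b + η < x then 0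
  else if x < a then (x - a + η) / η
  else if x ≤ b then 1
  else (-x + b + η) / η

lemma chiEta_nonneg (a b η x : ℝ) (hη : 0 < η) : 0 ≤ chiEta a b η x := by
  unfold chiEta
  split_ifs with h1 h2 h3
  · exact le_rfl
  all_goals push_neg at h1
  · exact div_nonneg (by linarith [h1.1]) hη.le
  · norm_num
  · exact div_nonneg (by linarith [h1.2]) hη.le

lemma chiEta_measurable (a b η : ℝ) : Measurable (chiEta a b η) := by
  unfold chiEta
  have h1 : MeasurableSet {x : ℝ | x < a - η ∨ b + η < x} := by
    rw [Set.setOf_or]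
    exact (measurableSet_lt measurable_id measurable_const).union
      (measurableSet_lt measurable_const measurable_id)
  exact Measurable.ite h1 measurable_const
    (Measurable.ite (measurableSet_lt measurable_id measurable_const)
      (((measurable_id.sub_const a).add_const η).div_const η)
      (Measurable.ite (measurableSet_le measurable_id measurable_const) measurable_const
        (((measurable_id.neg.add_const b).add_const η).div_const η)))

lemma chiEta_rep (a b η : ℝ) (hab : a ≤ b) (hη : 0 < η) (x : ℝ) :
    ENNReal.ofReal (chiEta a b η x)
      = volume {s : ℝ | s ∈ Set.Ioc (0:ℝ) 1 ∧ a - s*η ≤ x ∧ x ≤ b + s*η} := by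
  unfold chiEta
  split_ifs with h1 h2 h3
  · have : {s : ℝ | s ∈ Set.Ioc (0:ℝ) 1 ∧ a - s*η ≤ x ∧ x ≤ b + s*η} = ∅ := by
      rw [Set.eq_empty_iff_forall_notMem]
      rintro s ⟨⟨hs0, hs1⟩, hl, hr⟩
      rcases h1 with h | h
      · nlinarith
      · nlinarith
    rw [this]
    simp
  · push_neg at h1
    have : {s : ℝ | s ∈ Set.Ioc (0:ℝ) 1 ∧ a - s*η ≤ x ∧ x ≤ b + s*η}
        = Set.Icc ((a - x)/η) 1 := by
      ext s
      simp only [Set.mem_setOf_eq, Set.mem_Ioc, Set.mem_Icc]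
      constructor
      · rintro ⟨⟨hs0, hs1⟩, hl, hr⟩
        refine ⟨by rw [div_le_iff₀ hη]; nlinarith, hs1⟩
      · rintro ⟨hs0, hs1⟩
        have h0 : 0 < (a - x)/η := div_pos (by linarith) hη
        have h2' : a - x ≤ s * η := by rw [div_le_iff₀ hη] at hs0; linarith
        refine ⟨⟨by linarith, hs1⟩, by linarith, ?_⟩
        nlinarith
    rw [this, Real.volume_Icc]
    congr 1
    field_simp
    ring
  · push_neg at h2
    have : {s : ℝ | s ∈ Set.Ioc (0:ℝ) 1 ∧ a - s*η ≤ x ∧ x ≤ b + s*η}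
        = Set.Ioc (0:ℝ) 1 := by
      ext s
      simp only [Set.mem_setOf_eq, Set.mem_Ioc]
      constructor
      · rintro ⟨h, _⟩; exact h
      · rintro ⟨hs0, hs1⟩
        refine ⟨⟨hs0, hs1⟩, by nlinarith, by nlinarith⟩
    rw [this, Real.volume_Ioc]
    norm_num
  · push_neg at h1 h2 h3
    have : {s : ℝ | s ∈ Set.Ioc (0:ℝ) 1 ∧ a - s*η ≤ x ∧ x ≤ b + s*η}
        = Set.Icc ((x - b)/η) 1 := by
      ext s
      simp only [Set.mem_setOf_eq, Set.mem_Ioc, Set.mem_Icc]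
      constructor
      · rintro ⟨⟨hs0, hs1⟩, hl, hr⟩
        refine ⟨by rw [div_le_iff₀ hη]; nlinarith, hs1⟩
      · rintro ⟨hs0, hs1⟩
        have h0 : 0 < (x - b)/η := div_pos (by linarith) hη
        have h2' : x - b ≤ s * η := by rw [div_le_iff₀ hη] at hs0; linarith
        refine ⟨⟨by linarith, hs1⟩, by nlinarith, by linarith⟩
    rw [this, Real.volume_Icc]
    congr 1
    field_simp
    ring

/-- Key estimate in the proof of Lemma 4.3: Lipschitz dependence in `L¹` of
the mollified indicator controls on their parameters. -/
theorem stmt_9 (a b a' b' η η' : ℝ) (hab : a ≤ b) (hab' : a' ≤ b')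
    (hη : 0 < η) (hη' : 0 < η') :
    ∫ x : ℝ, |chiEta a b η x - chiEta a' b' η' x| ≤
      |η - η'| + |a - a'| + |b - b'| := by
  have hmf := chiEta_measurable a b η
  have hmg := chiEta_measurable a' b' η'
  set U1 : Set (ℝ × ℝ) := {p : ℝ × ℝ | p.2 ∈ Set.Ioc (0:ℝ) 1 ∧
      min (a - p.2*η) (a' - p.2*η') ≤ p.1 ∧ p.1 ≤ max (a - p.2*η) (a' - p.2*η')} with hU1def
  set U2 : Set (ℝ × ℝ) := {p : ℝ × ℝ | p.2 ∈ Set.Ioc (0:ℝ) 1 ∧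
      min (b + p.2*η) (b' + p.2*η') ≤ p.1 ∧ p.1 ≤ max (b + p.2*η) (b' + p.2*η')} with hU2def
  have hU1 : MeasurableSet U1 := by
    have : U1 = (Prod.snd ⁻¹' Set.Ioc (0:ℝ) 1) ∩
        ({p : ℝ × ℝ | min (a - p.2*η) (a' - p.2*η') ≤ p.1} ∩
         {p : ℝ × ℝ | p.1 ≤ max (a - p.2*η) (a' - p.2*η')}) := by
      ext p; simp only [hU1def, Set.mem_setOf_eq, Set.mem_inter_iff, Set.mem_preimage]
    rw [this]
    exact (measurable_snd measurableSet_Ioc).inter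
      ((measurableSet_le ((measurable_const.sub (measurable_snd.mul_const η)).min
          (measurable_const.sub (measurable_snd.mul_const η'))) measurable_fst).inter
        (measurableSet_le measurable_fst ((measurable_const.sub (measurable_snd.mul_const η)).max
          (measurable_const.sub (measurable_snd.mul_const η')))))
  have hU2 : MeasurableSet U2 := by
    have : U2 = (Prod.snd ⁻¹' Set.Ioc (0:ℝ) 1) ∩
        ({p : ℝ × ℝ | min (b + p.2*η) (b' + p.2*η') ≤ p.1} ∩
         {p : ℝ × ℝ | p.1 ≤ max (b + p.2*η) (b' + p.2*η')}) := by
      ext p; simp only [hU2def, Set.mem_setOf_eq, Set.mem_inter_iff, Set.mem_preimage]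
    rw [this]
    exact (measurable_snd measurableSet_Ioc).inter
      ((measurableSet_le ((measurable_const.add (measurable_snd.mul_const η)).min
          (measurable_const.add (measurable_snd.mul_const η'))) measurable_fst).inter
        (measurableSet_le measurable_fst ((measurable_const.add (measurable_snd.mul_const η)).max
          (measurable_const.add (measurable_snd.mul_const η')))))
  have hfin : ∀ W : Set ℝ, W ⊆ Set.Ioc (0:ℝ) 1 → volume W ≠ ⊤ := fun W hW =>
    ((measure_mono hW).trans_lt measure_Ioc_lt_top).ne
  -- pointwise bound
  have key : ∀ x : ℝ, ENNReal.ofReal |chiEta a b η x - chiEta a' b' η' x| ≤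
      volume (Prod.mk x ⁻¹' U1) + volume (Prod.mk x ⁻¹' U2) := by
    intro x
    set Sx := {s : ℝ | s ∈ Set.Ioc (0:ℝ) 1 ∧ a - s*η ≤ x ∧ x ≤ b + s*η} with hSxdef
    set Tx := {s : ℝ | s ∈ Set.Ioc (0:ℝ) 1 ∧ a' - s*η' ≤ x ∧ x ≤ b' + s*η'} with hTxdef
    have hfx : chiEta a b η x = (volume Sx).toReal := by
      rw [← chiEta_rep a b η hab hη x, ENNReal.toReal_ofReal (chiEta_nonneg a b η x hη)]
    have hgx : chiEta a' b' η' x = (volume Tx).toReal := by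
      rw [← chiEta_rep a' b' η' hab' hη' x, ENNReal.toReal_ofReal (chiEta_nonneg a' b' η' x hη')]
    have hSsub : Sx ⊆ Set.Ioc (0:ℝ) 1 := fun s hs => hs.1
    have hTsub : Tx ⊆ Set.Ioc (0:ℝ) 1 := fun s hs => hs.1
    have hU1sub : Prod.mk x ⁻¹' U1 ⊆ Set.Ioc (0:ℝ) 1 := fun s hs => hs.1
    have hU2sub : Prod.mk x ⁻¹' U2 ⊆ Set.Ioc (0:ℝ) 1 := fun s hs => hs.1
    have hsub1 : Sx ⊆ Tx ∪ (Prod.mk x ⁻¹' U1 ∪ Prod.mk x ⁻¹' U2) := by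
      intro s hs
      obtain ⟨hsIoc, hl, hr⟩ := hs
      by_cases hT : s ∈ Tx
      · exact Or.inl hT
      · right
        by_cases hA : a' - s*η' ≤ x
        · have hB : ¬ x ≤ b' + s*η' := fun hB => hT ⟨hsIoc, hA, hB⟩
          push_neg at hB
          exact Or.inr ⟨hsIoc, min_le_of_right_le (by linarith),
            le_max_of_le_left (by linarith)⟩
        · push_neg at hA
          exact Or.inl ⟨hsIoc, min_le_of_left_le (by linarith),
            le_max_of_le_right (by linarith)⟩
    have hsub2 : Tx ⊆ Sx ∪ (Prod.mk x ⁻¹' U1 ∪ Prod.mk x ⁻¹' U2) := by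
      intro s hs
      obtain ⟨hsIoc, hl, hr⟩ := hs
      by_cases hS : s ∈ Sx
      · exact Or.inl hS
      · right
        by_cases hA : a - s*η ≤ x
        · have hB : ¬ x ≤ b + s*η := fun hB => hS ⟨hsIoc, hA, hB⟩
          push_neg at hB
          exact Or.inr ⟨hsIoc, min_le_of_left_le (by linarith),
            le_max_of_le_right (by linarith)⟩
        · push_neg at hA
          exact Or.inl ⟨hsIoc, min_le_of_right_le (by linarith),
            le_max_of_le_left (by linarith)⟩
    have hUfin : volume (Prod.mk x ⁻¹' U1) + volume (Prod.mk x ⁻¹' U2) ≠ ⊤ :=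
      ENNReal.add_ne_top.mpr ⟨hfin _ hU1sub, hfin _ hU2sub⟩
    have habs : |chiEta a b η x - chiEta a' b' η' x| ≤
        (volume (Prod.mk x ⁻¹' U1) + volume (Prod.mk x ⁻¹' U2)).toReal := by
      rw [hfx, hgx, abs_sub_le_iff]
      constructor
      · have h1 : volume Sx ≤ volume Tx + (volume (Prod.mk x ⁻¹' U1) + volume (Prod.mk x ⁻¹' U2)) :=
          (measure_mono hsub1).trans ((measure_union_le _ _).trans
            (add_le_add le_rfl (measure_union_le _ _)))
        have h2 := ENNReal.toReal_mono
          (ENNReal.add_ne_top.mpr ⟨hfin _ hTsub, hUfin⟩) h1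
        rw [ENNReal.toReal_add (hfin _ hTsub) hUfin] at h2
        linarith
      · have h1 : volume Tx ≤ volume Sx + (volume (Prod.mk x ⁻¹' U1) + volume (Prod.mk x ⁻¹' U2)) :=
          (measure_mono hsub2).trans ((measure_union_le _ _).trans
            (add_le_add le_rfl (measure_union_le _ _)))
        have h2 := ENNReal.toReal_mono
          (ENNReal.add_ne_top.mpr ⟨hfin _ hSsub, hUfin⟩) h1
        rw [ENNReal.toReal_add (hfin _ hSsub) hUfin] at h2
        linarith
    calc ENNReal.ofReal |chiEta a b η x - chiEta a' b' η' x|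
        ≤ ENNReal.ofReal ((volume (Prod.mk x ⁻¹' U1) + volume (Prod.mk x ⁻¹' U2)).toReal) :=
          ENNReal.ofReal_le_ofReal habs
      _ = volume (Prod.mk x ⁻¹' U1) + volume (Prod.mk x ⁻¹' U2) :=
          ENNReal.ofReal_toReal hUfin
  -- slice bound in the s variable
  have slicebound : ∀ s : ℝ,
      volume ((fun x => (x, s)) ⁻¹' U1) + volume ((fun x => (x, s)) ⁻¹' U2) ≤
      (Set.Ioc (0:ℝ) 1).indicator
        (fun s => ENNReal.ofReal ((|a - a'| + |b - b'|) + 2*s*|η - η'|)) s := by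
    intro s
    by_cases hs : s ∈ Set.Ioc (0:ℝ) 1
    · rw [Set.indicator_of_mem hs]
      have e1 : (fun x => (x, s)) ⁻¹' U1 =
          Set.Icc (min (a - s*η) (a' - s*η')) (max (a - s*η) (a' - s*η')) := by
        ext y
        simp only [hU1def, Set.mem_preimage, Set.mem_setOf_eq, Set.mem_Icc, hs, true_and]
      have e2 : (fun x => (x, s)) ⁻¹' U2 =
          Set.Icc (min (b + s*η) (b' + s*η')) (max (b + s*η) (b' + s*η')) := by
        ext y
        simp only [hU2def, Set.mem_preimage, Set.mem_setOf_eq, Set.mem_Icc, hs, true_and]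
      rw [e1, e2, Real.volume_Icc, Real.volume_Icc, max_sub_min_eq_abs, max_sub_min_eq_abs,
        abs_sub_comm (a' - s*η') (a - s*η), abs_sub_comm (b' + s*η') (b + s*η)]
      have hb1 : |a - s*η - (a' - s*η')| ≤ |a - a'| + s*|η - η'| := by
        have h : a - s*η - (a' - s*η') = (a - a') - s*(η - η') := by ring
        rw [h]
        calc |(a - a') - s*(η - η')| ≤ |a - a'| + |s*(η - η')| := abs_sub _ _
          _ = |a - a'| + s*|η - η'| := by rw [abs_mul, abs_of_nonneg hs.1.le]
      have hb2 : |b + s*η - (b' + s*η')| ≤ |b - b'| + s*|η - η'| := by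
        have h : b + s*η - (b' + s*η') = (b - b') + s*(η - η') := by ring
        rw [h]
        calc |(b - b') + s*(η - η')| ≤ |b - b'| + |s*(η - η')| := abs_add_le _ _
          _ = |b - b'| + s*|η - η'| := by rw [abs_mul, abs_of_nonneg hs.1.le]
      calc ENNReal.ofReal |a - s*η - (a' - s*η')| + ENNReal.ofReal |b + s*η - (b' + s*η')|
          ≤ ENNReal.ofReal (|a - a'| + s*|η - η'|) + ENNReal.ofReal (|b - b'| + s*|η - η'|) :=
            add_le_add (ENNReal.ofReal_le_ofReal hb1) (ENNReal.ofReal_le_ofReal hb2)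
        _ = ENNReal.ofReal ((|a - a'| + |b - b'|) + 2*s*|η - η'|) := by
            rw [← ENNReal.ofReal_add (add_nonneg (abs_nonneg _)
              (mul_nonneg hs.1.le (abs_nonneg _))) (add_nonneg (abs_nonneg _)
              (mul_nonneg hs.1.le (abs_nonneg _)))]
            congr 1
            ring
    · rw [Set.indicator_of_notMem hs]
      have e1 : (fun x => (x, s)) ⁻¹' U1 = ∅ := by
        ext y
        simp only [hU1def, Set.mem_preimage, Set.mem_setOf_eq, Set.mem_empty_iff_false,
          iff_false, not_and]
        intro h; exact absurd h hs
      have e2 : (fun x => (x, s)) ⁻¹' U2 = ∅ := by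
        ext y
        simp only [hU2def, Set.mem_preimage, Set.mem_setOf_eq, Set.mem_empty_iff_false,
          iff_false, not_and]
        intro h; exact absurd h hs
      rw [e1, e2]
      simp
  -- integral computation
  have hcont : Continuous (fun s : ℝ => (|a - a'| + |b - b'|) + 2*s*|η - η'|) := by
    continuity
  have hcompute : ∫ s in Set.Ioc (0:ℝ) 1, ((|a - a'| + |b - b'|) + 2*s*|η - η'|) =
      (|a - a'| + |b - b'|) + |η - η'| := by
    rw [← intervalIntegral.integral_of_le (by norm_num : (0:ℝ) ≤ 1)]
    have hd : ∀ u ∈ Set.uIcc (0:ℝ) 1,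
        HasDerivAt (fun s : ℝ => (|a - a'| + |b - b'|)*s + s^2*|η - η'|)
          ((|a - a'| + |b - b'|) + 2*u*|η - η'|) u := by
      intro u _
      have h1 : HasDerivAt (fun s : ℝ => (|a - a'| + |b - b'|)*s) (|a - a'| + |b - b'|) u := by
        simpa using (hasDerivAt_id u).const_mul (|a - a'| + |b - b'|)
      have h2 : HasDerivAt (fun s : ℝ => s^2*|η - η'|) (2*u*|η - η'|) u := by
        have := (hasDerivAt_pow 2 u).mul_const (|η - η'|)
        simpa [pow_one] using this
      exact h1.add h2
    rw [intervalIntegral.integral_eq_sub_of_hasDerivAt hd (hcont.intervalIntegrable _ _)]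
    ring
  have hint : IntegrableOn (fun s : ℝ => (|a - a'| + |b - b'|) + 2*s*|η - η'|)
      (Set.Ioc (0:ℝ) 1) := hcont.integrableOn_Ioc
  have hnn : 0 ≤ᵐ[volume.restrict (Set.Ioc (0:ℝ) 1)]
      (fun s : ℝ => (|a - a'| + |b - b'|) + 2*s*|η - η'|) := by
    filter_upwards [ae_restrict_mem measurableSet_Ioc] with s hs
    simp only [Pi.zero_apply]
    have h1 : 0 ≤ 2*s*|η - η'| := mul_nonneg (by linarith [hs.1]) (abs_nonneg _)
    have h2 : 0 ≤ |a - a'| := abs_nonneg _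
    have h3 : 0 ≤ |b - b'| := abs_nonneg _
    linarith
  rw [integral_eq_lintegral_of_nonneg_ae (f := fun x => |chiEta a b η x - chiEta a' b' η' x|)
    (Filter.Eventually.of_forall fun x => abs_nonneg _)
    ((hmf.sub hmg).abs.aestronglyMeasurable : AEStronglyMeasurable
      (fun x => |chiEta a b η x - chiEta a' b' η' x|) volume)]
  apply ENNReal.toReal_le_of_le_ofReal (by positivity)
  calc ∫⁻ x, ENNReal.ofReal |chiEta a b η x - chiEta a' b' η' x|
      ≤ ∫⁻ x, (volume (Prod.mk x ⁻¹' U1) + volume (Prod.mk x ⁻¹' U2)) := lintegral_mono key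
    _ = volume.prod volume U1 + volume.prod volume U2 := by
        rw [lintegral_add_left (measurable_measure_prodMk_left hU1),
          Measure.prod_apply hU1, Measure.prod_apply hU2]
    _ = ∫⁻ s, (volume ((fun x => (x, s)) ⁻¹' U1) + volume ((fun x => (x, s)) ⁻¹' U2)) := by
        rw [Measure.prod_apply_symm hU1, Measure.prod_apply_symm hU2,
          lintegral_add_left (measurable_measure_prodMk_right hU1)]
    _ ≤ ∫⁻ s, (Set.Ioc (0:ℝ) 1).indicator
          (fun s => ENNReal.ofReal ((|a - a'| + |b - b'|) + 2*s*|η - η'|)) s :=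
        lintegral_mono slicebound
    _ = ∫⁻ s in Set.Ioc (0:ℝ) 1, ENNReal.ofReal ((|a - a'| + |b - b'|) + 2*s*|η - η'|) :=
        lintegral_indicator measurableSet_Ioc _
    _ = ENNReal.ofReal (∫ s in Set.Ioc (0:ℝ) 1, ((|a - a'| + |b - b'|) + 2*s*|η - η'|)) :=
        (ofReal_integral_eq_lintegral_ofReal hint hnn).symm
    _ = ENNReal.ofReal (|η - η'| + |a - a'| + |b - b'|) := by
        rw [hcompute]; congr 1; ring
end

section
/- Let u : ℝ → ℝ be a Lipschitz function with compact support satisfying 0 ≤ u(x) ≤ 1 for all x. Then for every ε > 0 there exist a positive integer N, heights k_1,…,k_N ∈ [0,1], and η₀ > 0 such that for every η ∈ (0, η₀] there exist real numbers a_1 ≤ b_1, …, a_N ≤ b_N for which the function s_η(x) = Σ_{i=1}^N k_i·χ^η_{[a_i,b_i]}(x) satisfies s_η(x) ≤ u(x) for all x and sup_x |u(x) − s_η(x)| ≤ ε. In particular, any nonnegative Lipschitz control with compact support can be uniformly approximated from below, up to any accuracy ε, by finite sums of mollified indicator controls with a number of terms N independent of the (sufficiently small) mollification parameter η. (Construction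 in Step 3 of the proof of the Main Theorem.) -/
namespace StmtHelp

variable {a b η x : ℝ}

lemma chi_nonneg (hη : 0 < η) (hab : a ≤ b) : 0 ≤ chiEta a b η x := by
  unfold chiEta
  split_ifs with h1 h2 h3
  · exact le_refl 0
  · push_neg at h1
    have := h1.1
    apply div_nonneg _ hη.le; linarith
  · norm_num
  · push_neg at h1
    apply div_nonneg _ hη.le; linarith [h1.2]

lemma chi_le_one (hη : 0 < η) (hab : a ≤ b) : chiEta a b η x ≤ 1 := by
  unfold chiEta
  split_ifs with h1 h2 h3
  · norm_num
  · rw [div_le_one hη]; linarith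
  · exact le_refl 1
  · push_neg at h2 h3
    rw [div_le_one hη]; linarith

lemma chi_eq_one (hη : 0 < η) (h1 : a ≤ x) (h2 : x ≤ b) : chiEta a b η x = 1 := by
  unfold chiEta
  rw [if_neg, if_neg (not_lt.2 h1), if_pos h2]
  push_neg
  constructor <;> linarith

lemma chi_eq_zero_left (hη : 0 < η) (hab : a ≤ b) (h : x ≤ a - η) : chiEta a b η x = 0 := by
  unfold chiEta
  rcases lt_or_eq_of_le h with h' | h'
  · rw [if_pos (Or.inl h')]
  · rw [if_neg, if_pos (by linarith)]
    · rw [h']; ring_nf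
    · push_neg; constructor <;> linarith

lemma chi_eq_zero_right (hη : 0 < η) (hab : a ≤ b) (h : b + η ≤ x) : chiEta a b η x = 0 := by
  unfold chiEta
  rcases lt_or_eq_of_le h with h' | h'
  · rw [if_pos (Or.inr h')]
  · rw [if_neg, if_neg, if_neg]
    · rw [← h']; ring_nf
    · linarith
    · push_neg; linarith
    · push_neg; constructor <;> linarith

lemma chi_ramp_up (hη : 0 < η) (hab : a ≤ b) (h1 : a - η ≤ x) (h2 : x ≤ a) :
    chiEta a b η x = (x - a + η) / η := by
  unfold chiEta
  rcases lt_or_eq_of_le h2 with h' | h'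
  · rw [if_neg, if_pos h']
    push_neg; constructor <;> linarith
  · rw [if_neg, if_neg, if_pos (by linarith)]
    · rw [h']; field_simp; ring
    · push_neg; linarith
    · push_neg; constructor <;> linarith

lemma chi_ramp_down (hη : 0 < η) (hab : a ≤ b) (h1 : b ≤ x) (h2 : x ≤ b + η) :
    chiEta a b η x = (-x + b + η) / η := by
  unfold chiEta
  rcases lt_or_eq_of_le h1 with h' | h'
  · rw [if_neg, if_neg, if_neg]
    · push_neg; linarith
    · push_neg; linarith
    · push_neg; constructor <;> linarith
  · rw [if_neg, if_neg, if_pos (le_of_eq h'.symm)]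
    · rw [← h']; field_simp; ring
    · push_neg; linarith
    · push_neg; constructor <;> linarith

lemma aux_count (r : ℝ) (m : ℤ) (L : ℕ) :
    ∑ ℓ ∈ Finset.range L, (if (ℓ:ℤ)+1 ≤ m then r else 0)
      = ((min (max m 0) (L:ℤ) : ℤ) : ℝ) * r := by
  induction L with
  | zero => simp
  | succ L ih =>
    rw [Finset.sum_range_succ, ih]
    by_cases h : (L:ℤ)+1 ≤ m
    · rw [if_pos h]
      have h1 : min (max m 0) ((L:ℤ)+1) = min (max m 0) (L:ℤ) + 1 := by omega
      push_cast [h1]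
      ring
    · rw [if_neg h]
      have h1 : min (max m 0) ((L:ℤ)+1) = min (max m 0) (L:ℤ) := by omega
      push_cast [h1]
      ring

lemma count_le (L : ℕ) (m : ℤ) (t : ℝ) (hm : (m:ℝ) ≤ (L:ℝ)*t) :
    ((min (max m 0) (L:ℤ) : ℤ) : ℝ) * (L:ℝ)⁻¹ ≤ max t 0 := by
  rcases Nat.eq_zero_or_pos L with h0 | h0
  · subst h0; simp [le_max_iff]
  have hL0 : (0:ℝ) < L := by positivity
  have h1 : ((min (max m 0) (L:ℤ) : ℤ) : ℝ) ≤ ((max m 0 : ℤ) : ℝ) := by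
    exact_mod_cast min_le_left _ _
  have h2 : ((max m 0 : ℤ) : ℝ) ≤ (L:ℝ) * max t 0 := by
    rcases le_or_gt m 0 with h | h
    · have : ((max m 0 : ℤ) : ℝ) = 0 := by norm_cast; omega
      rw [this]; positivity
    · have : ((max m 0 : ℤ) : ℝ) = (m:ℝ) := by norm_cast; omega
      rw [this]
      calc (m:ℝ) ≤ (L:ℝ)*t := hm
        _ ≤ (L:ℝ) * max t 0 := by
          apply mul_le_mul_of_nonneg_left (le_max_left _ _) hL0.le
  calc ((min (max m 0) (L:ℤ) : ℤ) : ℝ) * (L:ℝ)⁻¹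
      ≤ ((L:ℝ) * max t 0) * (L:ℝ)⁻¹ := by
        apply mul_le_mul_of_nonneg_right (h1.trans h2) (by positivity)
    _ = max t 0 := by field_simp

lemma count_ge (L : ℕ) (hL : 1 ≤ L) (m : ℤ) (t : ℝ) (ht : t ≤ 1)
    (hm : (L:ℝ)*t - 1 < (m:ℝ)) :
    t - 1/(L:ℝ) ≤ ((min (max m 0) (L:ℤ) : ℤ) : ℝ) * (L:ℝ)⁻¹ := by
  have hL0 : (0:ℝ) < L := by exact_mod_cast hL
  rcases le_or_gt (L:ℤ) m with h | h
  · have : min (max m 0) (L:ℤ) = L := by omega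
    rw [this]
    have h1 : ((L:ℤ):ℝ) * (L:ℝ)⁻¹ = 1 := by
      push_cast; field_simp
    rw [h1]
    have : 0 < 1/(L:ℝ) := by positivity
    linarith
  · have h2 : (m:ℝ) ≤ ((min (max m 0) (L:ℤ) : ℤ) : ℝ) := by
      exact_mod_cast (by omega : m ≤ min (max m 0) (L:ℤ))
    have h3 : t - 1/(L:ℝ) ≤ (m:ℝ) * (L:ℝ)⁻¹ := by
      rw [← div_eq_mul_inv, le_div_iff₀ hL0, sub_mul, one_div, inv_mul_cancel₀ hL0.ne']
      linarith
    calc t - 1/(L:ℝ) ≤ (m:ℝ)*(L:ℝ)⁻¹ := h3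
      _ ≤ _ := by apply mul_le_mul_of_nonneg_right h2 (by positivity)

end StmtHelp

noncomputable def kAux (c : ℕ → ℤ) (L : ℕ) (ℓ j : ℕ) : ℝ :=
  if (ℓ:ℤ)+1 ≤ c j then (L:ℝ)⁻¹ else 0

noncomputable def aAux (c : ℕ → ℤ) (xg : ℕ → ℝ) (η : ℝ) (ℓ j : ℕ) : ℝ :=
  if ((ℓ:ℤ)+1 ≤ c (j-1) ∧ 1 ≤ j) then xg j else xg j + η

noncomputable def bAux (xg : ℕ → ℝ) (η : ℝ) (j : ℕ) : ℝ := xg (j+1) - η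


open StmtHelp

set_option maxHeartbeats 1000000

/-- Step 3 of the proof of the Main Theorem: any nonnegative Lipschitz control
with compact support and values in `[0,1]` can be uniformly approximated from
below, within any `ε > 0`, by finite sums of mollified indicator controls,
with a number of terms `N` independent of the (sufficiently small)
mollification parameter `η`. -/
theorem stmt_11 (u : ℝ → ℝ)
    (hLip : ∃ K : NNReal, LipschitzWith K u)
    (hsupp : HasCompactSupport u)
    (hrange : ∀ x, u x ∈ Set.Icc (0 : ℝ) 1) :
    ∀ ε : ℝ, 0 < ε →
      ∃ (N : ℕ) (_ : 0 < N) (k : Fin N → ℝ) (η₀ : ℝ),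
        (∀ i, k i ∈ Set.Icc (0 : ℝ) 1) ∧ 0 < η₀ ∧
        ∀ η : ℝ, η ∈ Set.Ioc (0 : ℝ) η₀ →
          ∃ a b : Fin N → ℝ,
            (∀ i, a i ≤ b i) ∧
            (∀ x, (∑ i, k i * chiEta (a i) (b i) η x) ≤ u x) ∧
            (∀ x, |u x - ∑ i, k i * chiEta (a i) (b i) η x| ≤ ε) := by
  classical
  obtain ⟨K₀, hK₀⟩ := hLip
  intro ε hε
  set K : ℝ := (K₀:ℝ) + 1 with hKdef
  have hK1 : (1:ℝ) ≤ K := by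
    have : (0:ℝ) ≤ (K₀:ℝ) := K₀.2
    linarith
  have hK0 : (0:ℝ) < K := by linarith
  have hKlip : ∀ x y : ℝ, u x ≤ u y + K * |x - y| := by
    intro x y
    have h1 := hK₀.dist_le_mul x y
    rw [Real.dist_eq, Real.dist_eq] at h1
    have h2 : u x - u y ≤ (K₀:ℝ) * |x - y| := (le_abs_self _).trans h1
    nlinarith [abs_nonneg (x - y)]
  -- support bound
  obtain ⟨M₀, hM₀⟩ : ∃ r, tsupport u ⊆ Metric.closedBall 0 r :=
    hsupp.isBounded.subset_closedBall 0
  set M : ℝ := max M₀ 0 + 1 with hMdef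
  have hM1 : (1:ℝ) ≤ M := by
    have := le_max_right M₀ (0:ℝ); linarith
  have hM : ∀ x : ℝ, x ≤ -M ∨ M ≤ x → u x = 0 := by
    intro x hx
    apply image_eq_zero_of_notMem_tsupport
    intro hmem
    have h1 := hM₀ hmem
    rw [Metric.mem_closedBall, Real.dist_eq, sub_zero] at h1
    have h2 := le_max_left M₀ (0:ℝ)
    rcases hx with hx | hx
    · have := neg_abs_le x; simp [hMdef] at hx; linarith
    · have := le_abs_self x; simp [hMdef] at hx; linarith
  -- constants
  set δ : ℝ := min 1 (ε/(8*K)) with hδdef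
  have hδ0 : 0 < δ := lt_min one_pos (by positivity)
  have hδ1 : δ ≤ 1 := min_le_left _ _
  have hKδ : K*δ ≤ ε/8 := by
    have h1 : δ ≤ ε/(8*K) := min_le_right _ _
    calc K*δ ≤ K*(ε/(8*K)) := by nlinarith
      _ = ε/8 := by field_simp
  have hKδ0 : 0 ≤ K*δ := by positivity
  set L : ℕ := ⌈2/ε⌉₊ + 1 with hLdef
  have hL1 : 1 ≤ L := by omega
  have hLpos : (0:ℝ) < L := by exact_mod_cast hL1
  have hLε : 1/(L:ℝ) ≤ ε/2 := by
    have h1 : (2/ε) ≤ (L:ℝ) := by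
      calc (2/ε) ≤ (⌈2/ε⌉₊:ℝ) := Nat.le_ceil _
        _ ≤ (L:ℝ) := by exact_mod_cast Nat.le_succ _
    calc 1/(L:ℝ) ≤ 1/(2/ε) := one_div_le_one_div_of_le (by positivity) h1
      _ = ε/2 := one_div_div _ _
  set R : ℝ := M + 1 with hRdef
  set n : ℕ := ⌈(2*M+2)/δ⌉₊ + 2 with hndef
  have hn2 : 2 ≤ n := by omega
  set xg : ℕ → ℝ := fun j => -R + j*δ with hxgdef
  have hxg0 : xg 0 = -R := by simp [hxgdef]
  have hxgsucc : ∀ j : ℕ, xg (j+1) = xg j + δ := by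
    intro j; simp only [hxgdef]; push_cast; ring
  have hxgmono : ∀ i j : ℕ, i ≤ j → xg i ≤ xg j := by
    intro i j hij
    simp only [hxgdef]
    have : (i:ℝ) ≤ (j:ℝ) := by exact_mod_cast hij
    nlinarith
  have hv0 : u (xg 0) = 0 := by
    apply hM; left
    simp [hxgdef, hRdef]
  have hMn : M ≤ xg (n-1) := by
    have h1 : ((2*M+2)/δ) ≤ ((n:ℝ) - 1) := by
      have := Nat.le_ceil ((2*M+2)/δ)
      have h2 : ((n:ℝ)) = (⌈(2*M+2)/δ⌉₊:ℝ) + 2 := by exact_mod_cast rfl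
      linarith
    have h2 : 2*M + 2 ≤ ((n:ℝ)-1)*δ := by
      rw [div_le_iff₀ hδ0] at h1; linarith
    have h4 : ((n:ℝ)-1) = ((n-1 : ℕ):ℝ) := by
      have : 1 ≤ n := by omega
      push_cast [this]; ring
    simp only [hxgdef, hRdef]
    rw [← h4]
    linarith
  have hvlast : ∀ j, n-1 ≤ j → u (xg j) = 0 := by
    intro j hj
    apply hM; right
    exact hMn.trans (hxgmono _ _ hj)
  set c : ℕ → ℤ := fun j => ⌊(L:ℝ) * (u (xg j) - K*δ)⌋ with hcdef
  have hcle : ∀ j, ((c j):ℝ) ≤ (L:ℝ)*(u (xg j) - K*δ) := fun j => Int.floor_le _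
  have hcgt : ∀ j, (L:ℝ)*(u (xg j) - K*δ) - 1 < ((c j):ℝ) := fun j => Int.sub_one_lt_floor _
  have hczero : ∀ j, u (xg j) = 0 → ∀ ℓ : ℕ, ¬ ((ℓ:ℤ)+1 ≤ c j) := by
    intro j hj ℓ hle
    have h1 : ((c j):ℝ) ≤ (L:ℝ)*(0 - K*δ) := by rw [← hj]; exact hcle j
    have h2 : (L:ℝ)*(0-K*δ) < 0 := by nlinarith [mul_pos hK0 hδ0, hLpos]
    have h3 : (1:ℝ) ≤ ((ℓ:ℤ):ℝ)+1 := by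
      have : (0:ℝ) ≤ ((ℓ:ℕ):ℝ) := Nat.cast_nonneg ℓ
      push_cast; linarith
    have h4 : ((ℓ:ℤ):ℝ)+1 ≤ ((c j):ℝ) := by exact_mod_cast hle
    linarith
  -- locating x in the grid
  have hfloor : ∀ x : ℝ, xg 0 ≤ x → ∃ j₀ : ℕ, xg j₀ ≤ x ∧ x < xg (j₀+1) := by
    intro x hx0
    refine ⟨⌊(x+R)/δ⌋₊, ?_, ?_⟩
    · have hxR : 0 ≤ (x+R)/δ := by
        apply div_nonneg _ hδ0.le
        rw [hxg0] at hx0; linarith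
      have h1 := Nat.floor_le hxR
      rw [le_div_iff₀ hδ0] at h1
      simp only [hxgdef]; linarith
    · have h1 := Nat.lt_floor_add_one ((x+R)/δ)
      rw [div_lt_iff₀ hδ0] at h1
      simp only [hxgdef]; push_cast; linarith
  -- the result
  refine ⟨L*n, Nat.mul_pos (by omega) (by omega),
    fun i => kAux c L ((finProdFinEquiv.symm i).1 : ℕ) ((finProdFinEquiv.symm i).2 : ℕ),
    δ/2, ?_, by positivity, ?_⟩
  · intro i
    constructor
    · simp only [kAux]; split_ifs
      · positivity
      · exact le_refl _
    · simp only [kAux]; split_ifs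
      · rw [inv_le_one_iff₀]; right; exact_mod_cast hL1
      · norm_num
  intro η hη
  obtain ⟨hη0, hη2⟩ := hη
  have hηδ : 2*η ≤ δ := by linarith
  set T : ℕ → ℕ → ℝ → ℝ :=
    fun ℓ j x => kAux c L ℓ j * chiEta (aAux c xg η ℓ j) (bAux xg η j) η x with hTdef
  have hab : ∀ ℓ j, aAux c xg η ℓ j ≤ bAux xg η j := by
    intro ℓ j
    have := hxgsucc j
    simp only [aAux, bAux]
    split_ifs <;> linarith
  have hk0 : ∀ ℓ j, 0 ≤ kAux c L ℓ j := by
    intro ℓ j; simp only [kAux]; split_ifs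
    · positivity
    · exact le_refl _
  have hkle : ∀ ℓ j, kAux c L ℓ j ≤ (L:ℝ)⁻¹ := by
    intro ℓ j; simp only [kAux]; split_ifs
    · exact le_refl _
    · positivity
  have hT0 : ∀ ℓ j x, 0 ≤ T ℓ j x :=
    fun ℓ j x => mul_nonneg (hk0 ℓ j) (chi_nonneg hη0 (hab ℓ j))
  have ha_ge : ∀ ℓ j, xg j ≤ aAux c xg η ℓ j := by
    intro ℓ j; simp only [aAux]; split_ifs <;> linarith
  have ha_le : ∀ ℓ j, aAux c xg η ℓ j ≤ xg j + η := by
    intro ℓ j; simp only [aAux]; split_ifs <;> linarith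
  -- sum conversion
  have hsum : ∀ x : ℝ,
      (∑ i : Fin (L*n),
        kAux c L ((finProdFinEquiv.symm i).1 : ℕ) ((finProdFinEquiv.symm i).2 : ℕ) *
          chiEta (aAux c xg η ((finProdFinEquiv.symm i).1 : ℕ) ((finProdFinEquiv.symm i).2 : ℕ))
            (bAux xg η ((finProdFinEquiv.symm i).2 : ℕ)) η x)
      = ∑ ℓ ∈ Finset.range L, ∑ j ∈ Finset.range n, T ℓ j x := by
    intro x
    rw [Fintype.sum_equiv finProdFinEquiv.symm _
      (fun p : Fin L × Fin n => T (p.1 : ℕ) (p.2 : ℕ) x) (fun i => rfl)]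
    rw [Fintype.sum_prod_type]
    calc (∑ ℓ : Fin L, ∑ j : Fin n, T (ℓ : ℕ) (j : ℕ) x)
        = ∑ ℓ : Fin L, ∑ j ∈ Finset.range n, T (ℓ : ℕ) j x := by
          apply Finset.sum_congr rfl
          intro ℓ _
          exact Fin.sum_univ_eq_sum_range (fun j => T (ℓ:ℕ) j x) n
      _ = ∑ ℓ ∈ Finset.range L, ∑ j ∈ Finset.range n, T ℓ j x :=
          Fin.sum_univ_eq_sum_range (fun ℓ => ∑ j ∈ Finset.range n, T ℓ j x) L
  -- upper bound
  have hU : ∀ x, (∑ ℓ ∈ Finset.range L, ∑ j ∈ Finset.range n, T ℓ j x) ≤ u x := by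
    intro x
    have hux0 : 0 ≤ u x := (hrange x).1
    rcases lt_or_ge x (xg 0) with hx0 | hx0
    · rw [Finset.sum_eq_zero]
      · exact hux0
      intro ℓ _
      apply Finset.sum_eq_zero
      intro j _
      rcases Nat.eq_zero_or_pos j with rfl | hj1
      · simp only [hTdef, kAux]
        rw [if_neg (hczero 0 hv0 ℓ), zero_mul]
      · have hxa : x ≤ aAux c xg η ℓ j - η := by
          have h1 : xg 0 + δ ≤ xg j := by
            have := hxgmono 1 j hj1
            rw [hxgsucc 0] at this
            linarith
          have h2 := ha_ge ℓ j
          linarith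
        simp only [hTdef]
        rw [chi_eq_zero_left hη0 (hab ℓ j) hxa, mul_zero]
    · obtain ⟨j₀, hj₀le, hj₀lt⟩ := hfloor x hx0
      rcases le_or_gt (n-1) j₀ with hbig | hsmall
      · rw [Finset.sum_eq_zero]
        · exact hux0
        intro ℓ _
        apply Finset.sum_eq_zero
        intro j hj
        rw [Finset.mem_range] at hj
        rcases lt_or_ge (j+1) n with hjn | hjn
        · have h1 : xg (j+1) ≤ xg j₀ := hxgmono _ _ (by omega)
          simp only [hTdef]
          rw [chi_eq_zero_right hη0 (hab ℓ j) (by simp only [bAux]; linarith), mul_zero]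
        · have hj' : n - 1 ≤ j := by omega
          simp only [hTdef, kAux]
          rw [if_neg (hczero j (hvlast j hj') ℓ), zero_mul]
      · have hj₀n : j₀ + 1 < n := by omega
        have hlev : ∀ ℓ ∈ Finset.range L,
            (∑ j ∈ Finset.range n, T ℓ j x) ≤ (if (ℓ:ℤ)+1 ≤ c j₀ then (L:ℝ)⁻¹ else 0) := by
          intro ℓ _
          have hpair : ({j₀, j₀+1} : Finset ℕ) ⊆ Finset.range n := by
            intro t ht
            simp only [Finset.mem_insert, Finset.mem_singleton] at ht
            rw [Finset.mem_range]
            rcases ht with rfl | rfl <;> omega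
          have hzero : ∀ j ∈ Finset.range n, j ∉ ({j₀, j₀+1} : Finset ℕ) → T ℓ j x = 0 := by
            intro j _ hj
            simp only [Finset.mem_insert, Finset.mem_singleton] at hj
            push_neg at hj
            rcases lt_or_ge j j₀ with h | h
            · have h1 : xg (j+1) ≤ xg j₀ := hxgmono _ _ (by omega)
              simp only [hTdef]
              rw [chi_eq_zero_right hη0 (hab ℓ j) (by simp only [bAux]; linarith), mul_zero]
            · have h2 : j₀ + 2 ≤ j := by omega
              have h1 : xg (j₀+1) + δ ≤ xg j := by
                have h3 := hxgmono (j₀+2) j h2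
                have h4 := hxgsucc (j₀+1)
                linarith
              have hxa : x ≤ aAux c xg η ℓ j - η := by
                have := ha_ge ℓ j; linarith
              simp only [hTdef]
              rw [chi_eq_zero_left hη0 (hab ℓ j) hxa, mul_zero]
          rw [← Finset.sum_subset hpair hzero, Finset.sum_pair (by omega : j₀ ≠ j₀+1)]
          by_cases hc : (ℓ:ℤ)+1 ≤ c j₀
          · rw [if_pos hc]
            rcases le_or_gt x (xg (j₀+1) - η) with hle | hgt
            · have h2 : T ℓ (j₀+1) x = 0 := by
                have hxa : x ≤ aAux c xg η ℓ (j₀+1) - η := by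
                  have := ha_ge ℓ (j₀+1); linarith
                simp only [hTdef]
                rw [chi_eq_zero_left hη0 (hab _ _) hxa, mul_zero]
              rw [h2, add_zero]
              have hh : T ℓ j₀ x ≤ (L:ℝ)⁻¹ * 1 := by
                simp only [hTdef]
                exact mul_le_mul (hkle _ _) (chi_le_one hη0 (hab _ _))
                  (chi_nonneg hη0 (hab _ _)) (by positivity)
              rw [mul_one] at hh
              exact hh
            · have hA1 : aAux c xg η ℓ (j₀+1) = xg (j₀+1) := by
                simp only [aAux, Nat.add_sub_cancel]
                rw [if_pos ⟨hc, by omega⟩]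
              have hchi1 : chiEta (aAux c xg η ℓ (j₀+1)) (bAux xg η (j₀+1)) η x
                  = (x - xg (j₀+1) + η)/η := by
                have hab' : xg (j₀+1) ≤ bAux xg η (j₀+1) := hA1 ▸ hab ℓ (j₀+1)
                rw [hA1]
                exact chi_ramp_up hη0 hab' (by linarith) hj₀lt.le
              have hchi0 : chiEta (aAux c xg η ℓ j₀) (bAux xg η j₀) η x
                  = (-x + (xg (j₀+1) - η) + η)/η := by
                have hb : bAux xg η j₀ = xg (j₀+1) - η := rfl
                rw [← hb]
                apply chi_ramp_down hη0 (hab _ _) (by rw [hb]; linarith) (by rw [hb]; linarith)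
              have hs1 : chiEta (aAux c xg η ℓ j₀) (bAux xg η j₀) η x
                  + chiEta (aAux c xg η ℓ (j₀+1)) (bAux xg η (j₀+1)) η x = 1 := by
                rw [hchi0, hchi1, ← add_div,
                  show (-x + (xg (j₀+1) - η) + η) + (x - xg (j₀+1) + η) = η by ring,
                  div_self hη0.ne']
              have hc0 := chi_nonneg (a := aAux c xg η ℓ j₀) (b := bAux xg η j₀) (x := x) hη0 (hab _ _)
              have hc1 := chi_nonneg (a := aAux c xg η ℓ (j₀+1)) (b := bAux xg η (j₀+1)) (x := x) hη0 (hab _ _)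
              calc T ℓ j₀ x + T ℓ (j₀+1) x
                  ≤ (L:ℝ)⁻¹ * chiEta (aAux c xg η ℓ j₀) (bAux xg η j₀) η x
                    + (L:ℝ)⁻¹ * chiEta (aAux c xg η ℓ (j₀+1)) (bAux xg η (j₀+1)) η x := by
                    apply add_le_add
                    · exact mul_le_mul_of_nonneg_right (hkle _ _) hc0
                    · exact mul_le_mul_of_nonneg_right (hkle _ _) hc1
                _ = (L:ℝ)⁻¹ := by rw [← mul_add, hs1, mul_one]
          · rw [if_neg hc]
            have h1 : T ℓ j₀ x = 0 := by
              simp only [hTdef, kAux]; rw [if_neg hc, zero_mul]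
            have h2 : T ℓ (j₀+1) x = 0 := by
              have hA1 : aAux c xg η ℓ (j₀+1) = xg (j₀+1) + η := by
                simp only [aAux, Nat.add_sub_cancel]
                rw [if_neg]
                intro hh
                exact hc hh.1
              simp only [hTdef]
              rw [chi_eq_zero_left hη0 (hab _ _) (by rw [hA1]; linarith), mul_zero]
            rw [h1, h2]; norm_num
        calc (∑ ℓ ∈ Finset.range L, ∑ j ∈ Finset.range n, T ℓ j x)
            ≤ ∑ ℓ ∈ Finset.range L, (if (ℓ:ℤ)+1 ≤ c j₀ then (L:ℝ)⁻¹ else 0) :=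
              Finset.sum_le_sum hlev
          _ = ((min (max (c j₀) 0) (L:ℤ) : ℤ):ℝ) * (L:ℝ)⁻¹ := aux_count _ _ _
          _ ≤ max (u (xg j₀) - K*δ) 0 := count_le L (c j₀) _ (hcle j₀)
          _ ≤ u x := by
            apply max_le _ hux0
            have h1 := hKlip (xg j₀) x
            have habs : |xg j₀ - x| ≤ δ := by
              rw [abs_le]
              have := hxgsucc j₀
              constructor <;> linarith
            nlinarith
  -- lower bound
  have hLow : ∀ x, u x - (∑ ℓ ∈ Finset.range L, ∑ j ∈ Finset.range n, T ℓ j x) ≤ ε := by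
    intro x
    have hS0 : 0 ≤ ∑ ℓ ∈ Finset.range L, ∑ j ∈ Finset.range n, T ℓ j x :=
      Finset.sum_nonneg fun ℓ _ => Finset.sum_nonneg fun j _ => hT0 ℓ j x
    rcases lt_or_ge x (xg 0) with hx0 | hx0
    · have hu0 : u x = 0 := by
        apply hM; left
        rw [hxg0] at hx0
        simp only [hRdef] at hx0
        linarith
      linarith
    · obtain ⟨j₀, hj₀le, hj₀lt⟩ := hfloor x hx0
      rcases le_or_gt (n-1) j₀ with hbig | hsmall
      · have hu0 : u x = 0 := by
          apply hM; right
          exact hMn.trans ((hxgmono _ _ hbig).trans hj₀le)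
        linarith
      rcases Nat.eq_zero_or_pos j₀ with rfl | hj₀1
      · have hu0 : u x = 0 := by
          apply hM; left
          have h1 := hxgsucc 0
          rw [hxg0] at h1
          simp only [hRdef] at h1
          have : x < xg 1 := hj₀lt
          rw [h1] at this
          linarith
        linarith
      have hj₀n : j₀ + 1 < n := by omega
      -- generic lower-bound engine
      have hkey : ∀ (m : ℤ) (t : ℝ), t ≤ 1 → (L:ℝ)*t - 1 < (m:ℝ) → u x ≤ t + 3*(K*δ) →
          (∀ ℓ ∈ Finset.range L,
            (if (ℓ:ℤ)+1 ≤ m then (L:ℝ)⁻¹ else 0) ≤ ∑ j ∈ Finset.range n, T ℓ j x) →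
          u x - (∑ ℓ ∈ Finset.range L, ∑ j ∈ Finset.range n, T ℓ j x) ≤ ε := by
        intro m t ht hm hut hlev
        have h1 : ((min (max m 0) (L:ℤ) : ℤ):ℝ) * (L:ℝ)⁻¹
            ≤ ∑ ℓ ∈ Finset.range L, ∑ j ∈ Finset.range n, T ℓ j x := by
          rw [← aux_count (L:ℝ)⁻¹ m L]
          exact Finset.sum_le_sum hlev
        have h2 := count_ge L hL1 m t ht hm
        have h3 : t - 1/(L:ℝ) ≤ (∑ ℓ ∈ Finset.range L, ∑ j ∈ Finset.range n, T ℓ j x) :=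
          le_trans h2 h1
        have q1 : u x - (∑ ℓ ∈ Finset.range L, ∑ j ∈ Finset.range n, T ℓ j x)
            ≤ 1/(L:ℝ) + 3*(K*δ) := by
          have w2 : t ≤ (∑ ℓ ∈ Finset.range L, ∑ j ∈ Finset.range n, T ℓ j x) + 1/(L:ℝ) :=
            sub_le_iff_le_add.mp h3
          calc u x - (∑ ℓ ∈ Finset.range L, ∑ j ∈ Finset.range n, T ℓ j x)
              ≤ t + 3*(K*δ) - (∑ ℓ ∈ Finset.range L, ∑ j ∈ Finset.range n, T ℓ j x) :=
                sub_le_sub_right hut _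
            _ ≤ ((∑ ℓ ∈ Finset.range L, ∑ j ∈ Finset.range n, T ℓ j x) + 1/(L:ℝ)) + 3*(K*δ)
                - (∑ ℓ ∈ Finset.range L, ∑ j ∈ Finset.range n, T ℓ j x) := by
                apply sub_le_sub_right
                exact add_le_add_left w2 _
            _ = 1/(L:ℝ) + 3*(K*δ) := by ring
        have q2 : (1:ℝ)/(L:ℝ) + 3*(K*δ) ≤ ε := by linarith only [hLε, hKδ, hε]
        linarith only [q1, q2]
      -- case analysis on position within the cell
      rcases lt_or_ge x (xg j₀ + η) with hcase2 | hge
      · -- near the left edge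
        obtain ⟨p, rfl⟩ : ∃ p, j₀ = p + 1 := ⟨j₀ - 1, by omega⟩
        apply hkey (min (c p) (c (p+1))) (min (u (xg p)) (u (xg (p+1))) - K*δ)
        · have := (hrange (xg p)).2
          have h2 := min_le_left (u (xg p)) (u (xg (p+1)))
          linarith
        · have hcast : ((min (c p) (c (p+1)) : ℤ):ℝ) = min ((c p):ℝ) ((c (p+1)):ℝ) := by
            push_cast; rfl
          rw [hcast]
          apply lt_min
          · have h1 : (L:ℝ)*(min (u (xg p)) (u (xg (p+1))) - K*δ) ≤ (L:ℝ)*(u (xg p) - K*δ) := by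
              apply mul_le_mul_of_nonneg_left _ hLpos.le
              have := min_le_left (u (xg p)) (u (xg (p+1))); linarith
            linarith [hcgt p]
          · have h1 : (L:ℝ)*(min (u (xg p)) (u (xg (p+1))) - K*δ)
                ≤ (L:ℝ)*(u (xg (p+1)) - K*δ) := by
              apply mul_le_mul_of_nonneg_left _ hLpos.le
              have := min_le_right (u (xg p)) (u (xg (p+1))); linarith
            linarith [hcgt (p+1)]
        · -- u x ≤ min - Kδ + 3Kδ
          have hb1 : u x ≤ u (xg (p+1)) + K*δ := by
            have h1 := hKlip x (xg (p+1))
            have habs : |x - xg (p+1)| ≤ δ := by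
              rw [abs_le]
              constructor <;> linarith
            nlinarith
          have hb2 : u x ≤ u (xg p) + 2*(K*δ) := by
            have h1 := hKlip x (xg p)
            have habs : |x - xg p| ≤ 2*δ := by
              have := hxgsucc p
              rw [abs_le]
              constructor <;> linarith
            nlinarith
          rcases min_cases (u (xg p)) (u (xg (p+1))) with ⟨hmin, _⟩ | ⟨hmin, _⟩ <;>
            rw [hmin] <;> linarith
        · intro ℓ _
          by_cases hc : (ℓ:ℤ)+1 ≤ min (c p) (c (p+1))
          · rw [if_pos hc]
            rw [le_min_iff] at hc
            have hA1 : aAux c xg η ℓ (p+1) = xg (p+1) := by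
              simp only [aAux, Nat.add_sub_cancel]
              rw [if_pos ⟨hc.1, by omega⟩]
            have hTval : T ℓ (p+1) x = (L:ℝ)⁻¹ := by
              simp only [hTdef, kAux]
              rw [if_pos hc.2]
              rw [chi_eq_one hη0 (by rw [hA1]; exact hj₀le) ?_, mul_one]
              have hb : bAux xg η (p+1) = xg (p+2) - η := rfl
              have := hxgsucc (p+1)
              rw [hb]
              linarith
            rw [← hTval]
            exact Finset.single_le_sum (fun j _ => hT0 ℓ j x) (Finset.mem_range.2 (by omega))
          · rw [if_neg hc]
            exact Finset.sum_nonneg fun j _ => hT0 ℓ j x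
      rcases le_or_gt x (xg (j₀+1) - η) with hle | hcase3
      · -- middle of the cell
        apply hkey (c j₀) (u (xg j₀) - K*δ)
        · have := (hrange (xg j₀)).2; linarith
        · exact hcgt j₀
        · have h1 := hKlip x (xg j₀)
          have habs : |x - xg j₀| ≤ δ := by
            have := hxgsucc j₀
            rw [abs_le]
            constructor <;> linarith
          nlinarith
        · intro ℓ _
          by_cases hc : (ℓ:ℤ)+1 ≤ c j₀
          · rw [if_pos hc]
            have hTval : T ℓ j₀ x = (L:ℝ)⁻¹ := by
              simp only [hTdef, kAux]
              rw [if_pos hc]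
              rw [chi_eq_one hη0 ?_ ?_, mul_one]
              · have := ha_le ℓ j₀; linarith
              · have hb : bAux xg η j₀ = xg (j₀+1) - η := rfl
                rw [hb]; linarith
            rw [← hTval]
            exact Finset.single_le_sum (fun j _ => hT0 ℓ j x) (Finset.mem_range.2 (by omega))
          · rw [if_neg hc]
            exact Finset.sum_nonneg fun j _ => hT0 ℓ j x
      · -- near the right edge
        apply hkey (min (c j₀) (c (j₀+1))) (min (u (xg j₀)) (u (xg (j₀+1)))- K*δ)
        · have := (hrange (xg j₀)).2
          have h2 := min_le_left (u (xg j₀)) (u (xg (j₀+1)))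
          linarith
        · have hcast : ((min (c j₀) (c (j₀+1)) : ℤ):ℝ) = min ((c j₀):ℝ) ((c (j₀+1)):ℝ) := by
            push_cast; rfl
          rw [hcast]
          apply lt_min
          · have h1 : (L:ℝ)*(min (u (xg j₀)) (u (xg (j₀+1))) - K*δ)
                ≤ (L:ℝ)*(u (xg j₀) - K*δ) := by
              apply mul_le_mul_of_nonneg_left _ hLpos.le
              have := min_le_left (u (xg j₀)) (u (xg (j₀+1))); linarith
            linarith [hcgt j₀]
          · have h1 : (L:ℝ)*(min (u (xg j₀)) (u (xg (j₀+1))) - K*δ)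
                ≤ (L:ℝ)*(u (xg (j₀+1)) - K*δ) := by
              apply mul_le_mul_of_nonneg_left _ hLpos.le
              have := min_le_right (u (xg j₀)) (u (xg (j₀+1))); linarith
            linarith [hcgt (j₀+1)]
        · have hb1 : u x ≤ u (xg j₀) + K*δ := by
            have h1 := hKlip x (xg j₀)
            have habs : |x - xg j₀| ≤ δ := by
              have := hxgsucc j₀
              rw [abs_le]
              constructor <;> linarith
            nlinarith
          have hb2 : u x ≤ u (xg (j₀+1)) + K*δ := by
            have h1 := hKlip x (xg (j₀+1))
            have habs : |x - xg (j₀+1)| ≤ δ := by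
              rw [abs_le]
              constructor <;> linarith
            nlinarith
          rcases min_cases (u (xg j₀)) (u (xg (j₀+1))) with ⟨hmin, _⟩ | ⟨hmin, _⟩ <;>
            rw [hmin] <;> linarith
        · intro ℓ _
          by_cases hc : (ℓ:ℤ)+1 ≤ min (c j₀) (c (j₀+1))
          · rw [if_pos hc]
            rw [le_min_iff] at hc
            have hA1 : aAux c xg η ℓ (j₀+1) = xg (j₀+1) := by
              simp only [aAux, Nat.add_sub_cancel]
              rw [if_pos ⟨hc.1, by omega⟩]
            have hchi1 : chiEta (aAux c xg η ℓ (j₀+1)) (bAux xg η (j₀+1)) η x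
                = (x - xg (j₀+1) + η)/η := by
              have hab' : xg (j₀+1) ≤ bAux xg η (j₀+1) := by
                have := hab ℓ (j₀+1); rw [hA1] at this; exact this
              rw [hA1]
              exact chi_ramp_up hη0 hab' (by linarith) hj₀lt.le
            have hchi0 : chiEta (aAux c xg η ℓ j₀) (bAux xg η j₀) η x
                = (-x + (xg (j₀+1) - η) + η)/η := by
              have hb : bAux xg η j₀ = xg (j₀+1) - η := rfl
              rw [← hb]
              apply chi_ramp_down hη0 (hab _ _) (by rw [hb]; linarith) (by rw [hb]; linarith)
            have hTsum : T ℓ j₀ x + T ℓ (j₀+1) x = (L:ℝ)⁻¹ := by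
              simp only [hTdef, kAux]
              rw [if_pos hc.1, if_pos hc.2, hchi0, hchi1, ← mul_add]
              rw [← add_div,
                show (-x + (xg (j₀+1) - η) + η) + (x - xg (j₀+1) + η) = η by ring,
                div_self hη0.ne', mul_one]
            have hpair : ({j₀, j₀+1} : Finset ℕ) ⊆ Finset.range n := by
              intro t ht
              simp only [Finset.mem_insert, Finset.mem_singleton] at ht
              rw [Finset.mem_range]
              rcases ht with rfl | rfl <;> omega
            have hstep : (L:ℝ)⁻¹ ≤ ∑ j ∈ Finset.range n, T ℓ j x := by
              have he : (L:ℝ)⁻¹ = ∑ j ∈ ({j₀, j₀+1} : Finset ℕ), T ℓ j x := by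
                rw [Finset.sum_pair (by omega : j₀ ≠ j₀+1), hTsum]
              rw [he]
              exact Finset.sum_le_sum_of_subset_of_nonneg hpair fun j _ _ => hT0 ℓ j x
            exact hstep
          · rw [if_neg hc]
            exact Finset.sum_nonneg fun j _ => hT0 ℓ j x
  -- finish
  refine ⟨fun i => aAux c xg η ((finProdFinEquiv.symm i).1 : ℕ) ((finProdFinEquiv.symm i).2 : ℕ),
    fun i => bAux xg η ((finProdFinEquiv.symm i).2 : ℕ), fun i => hab _ _, ?_, ?_⟩
  · intro x
    rw [hsum x]
    exact hU x
  · intro x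
    rw [hsum x]
    rw [abs_of_nonneg (by linarith [hU x])]
    exact hLow x
end
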